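/- Let 0 < γ < η ≤ 1 and f(x) = |x − γ| on ℝ. Run projected gradient descent on [−1,1] with step size η started at x_0 = 0 for T iterations (f is differentiable at every visited point, so the updates are uniquely determined). Then the iterates alternate: x_t = 0 for every even t and x_t = η for every odd t with t ≤ T. Consequently the averaged output satisfies x^GD = (1/T) Σ_{t=1}^T x_t = η·⌈T/2⌉/T ≥ η/2, and f(x^GD) − min_{x∈[−1,1]} f(x) ≥ η/2 − γ. -/

import Mathlib

open scoped BigOperators

/-- Projected gradient descent on `[−1,1]` with step size `η` for `f(x) = |x − γ|`, started
at `0`; at each visited point `f` is differentiable with `f'(x) = −1` for `x < γ` and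
`f'(x) = 1` for `x > γ`, so the iterates are uniquely determined. -/
noncomputable def absSeq (γ η : ℝ) : ℕ → ℝ
  | 0 => 0
  | t + 1 =>
      max (-1) (min 1 (absSeq γ η t - η * (if absSeq γ η t < γ then (-1 : ℝ) else 1)))

lemma absSeq_pair (γ η : ℝ) (hγ : 0 < γ) (hγη : γ < η) (hη : η ≤ 1) (k : ℕ) :
    absSeq γ η (2 * k) = 0 ∧ absSeq γ η (2 * k + 1) = η := by
  induction k with
  | zero =>
    constructor
    · rfl
    · show max (-1) (min 1 (absSeq γ η 0 - η * (if absSeq γ η 0 < γ then (-1:ℝ) else 1))) = η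
      rw [show absSeq γ η 0 = 0 from rfl, if_pos hγ]
      rw [min_eq_right (by linarith), max_eq_right (by linarith)]
      ring
  | succ k ih =>
    have h2 : absSeq γ η (2 * (k + 1)) = 0 := by
      show max (-1) (min 1 (absSeq γ η (2*k+1) - η * (if absSeq γ η (2*k+1) < γ then (-1:ℝ) else 1))) = 0
      rw [ih.2, if_neg (by linarith)]
      rw [show η - η * 1 = 0 by ring, min_eq_right (by norm_num), max_eq_right (by norm_num)]
    refine ⟨h2, ?_⟩
    show max (-1) (min 1 (absSeq γ η (2*(k+1)) - η * (if absSeq γ η (2*(k+1)) < γ then (-1:ℝ) else 1))) = η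
    rw [h2, if_pos hγ]
    rw [min_eq_right (by linarith), max_eq_right (by linarith)]
    ring

/-- For `0 < γ < η ≤ 1` and `f(x) = |x − γ|`, the GD iterates on `[−1,1]`
alternate: `x_t = 0` for even `t` and `x_t = η` for odd `t ≤ T`. Consequently the averaged
output satisfies `x^GD = η·⌈T/2⌉/T ≥ η/2` and `f(x^GD) − min_{[−1,1]} f ≥ η/2 − γ`. -/
theorem gd_oscillation_lower_bound (γ η : ℝ) (hγ : 0 < γ) (hγη : γ < η) (hη : η ≤ 1)
    (T : ℕ) (hT : 1 ≤ T) :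
    (∀ t, t % 2 = 0 → absSeq γ η t = 0) ∧
    (∀ t, t % 2 = 1 → t ≤ T → absSeq γ η t = η) ∧
    (T : ℝ)⁻¹ * ∑ t ∈ Finset.Icc 1 T, absSeq γ η t = η * (((T + 1) / 2 : ℕ) : ℝ) / (T : ℝ) ∧
    η / 2 ≤ (T : ℝ)⁻¹ * ∑ t ∈ Finset.Icc 1 T, absSeq γ η t ∧
    η / 2 - γ ≤ |(T : ℝ)⁻¹ * ∑ t ∈ Finset.Icc 1 T, absSeq γ η t - γ| -
      sInf ((fun x => |x - γ|) '' Set.Icc (-1 : ℝ) 1) := by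
  have heven : ∀ t, t % 2 = 0 → absSeq γ η t = 0 := by
    intro t ht
    obtain ⟨k, rfl⟩ : ∃ k, t = 2 * k := ⟨t / 2, by omega⟩
    exact (absSeq_pair γ η hγ hγη hη k).1
  have hodd : ∀ t, t % 2 = 1 → absSeq γ η t = η := by
    intro t ht
    obtain ⟨k, rfl⟩ : ∃ k, t = 2 * k + 1 := ⟨t / 2, by omega⟩
    exact (absSeq_pair γ η hγ hγη hη k).2
  have hsum : ∀ n : ℕ, ∑ t ∈ Finset.Icc 1 n, absSeq γ η t = η * (((n + 1) / 2 : ℕ) : ℝ) := by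
    intro n
    induction n with
    | zero => simp
    | succ n ih =>
      rw [Finset.sum_Icc_succ_top (by omega), ih]
      rcases Nat.mod_two_eq_zero_or_one (n + 1) with h | h
      · rw [heven (n+1) h]
        have : (n + 1 + 1) / 2 = (n + 1) / 2 := by omega
        rw [this]; ring
      · rw [hodd (n+1) h]
        have : (n + 1 + 1) / 2 = (n + 1) / 2 + 1 := by omega
        rw [this]; push_cast; ring
  have hTpos : (0:ℝ) < T := by exact_mod_cast hT
  have havg : (T : ℝ)⁻¹ * ∑ t ∈ Finset.Icc 1 T, absSeq γ η t
      = η * (((T + 1) / 2 : ℕ) : ℝ) / (T : ℝ) := by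
    rw [hsum]; field_simp
  have hceil : (T : ℝ) / 2 ≤ (((T + 1) / 2 : ℕ) : ℝ) := by
    have : T ≤ 2 * ((T + 1) / 2) := by omega
    have := (Nat.cast_le (α := ℝ)).2 this
    push_cast at this; linarith
  have hge : η / 2 ≤ (T : ℝ)⁻¹ * ∑ t ∈ Finset.Icc 1 T, absSeq γ η t := by
    rw [havg, le_div_iff₀ hTpos]
    nlinarith [hceil]
  have hinf : sInf ((fun x => |x - γ|) '' Set.Icc (-1 : ℝ) 1) = 0 := by
    apply le_antisymm
    · apply csInf_le ⟨0, fun y hy => ?_⟩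
      · exact ⟨γ, ⟨by linarith, by linarith⟩, by simp⟩
      · obtain ⟨x, _, rfl⟩ := hy; positivity
    · have hne : ((fun x => |x - γ|) '' Set.Icc (-1 : ℝ) 1).Nonempty :=
        ⟨|(0:ℝ) - γ|, 0, ⟨by norm_num, by norm_num⟩, rfl⟩
      apply le_csInf hne
      rintro y ⟨x, _, rfl⟩; positivity
  refine ⟨heven, fun t ht _ => hodd t ht, havg, hge, ?_⟩
  rw [hinf, sub_zero]
  have hγ2 : γ < η / 2 ∨ ¬ (γ < η / 2) := em _
  calc η / 2 - γ ≤ ((T : ℝ)⁻¹ * ∑ t ∈ Finset.Icc 1 T, absSeq γ η t) - γ := by linarith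
    _ ≤ |(T : ℝ)⁻¹ * ∑ t ∈ Finset.Icc 1 T, absSeq γ η t - γ| := le_abs_self _
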